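/- Let n ≥ 2, φ ∈ (0, 1/n), and p ∈ (log n / log(nφ), 0). For every x in the open simplex Δⁿ₊ with xᵢ > φ for all i, the diversity-weighted portfolio weights πᵢ := xᵢᵖ / Σⱼ xⱼᵖ satisfy maxᵢ πᵢ = (minᵢ xᵢ)ᵖ / Σⱼ xⱼᵖ < (nφ)ᵖ / n < 1. -/

import Mathlib

open Finset Real

/-- largest-weight bound for the negative-parameter
diversity-weighted portfolio under the no-failure condition. -/
theorem diversity_weighted_largest_weight_bound
    (n : ℕ) (hn : 2 ≤ n)
    (φ : ℝ) (hφ : 0 < φ ∧ φ < 1 / n)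
    (p : ℝ) (hp : Real.log n / Real.log (n * φ) < p ∧ p < 0)
    (x : Fin n → ℝ) (hx : ∀ i, 0 < x i ∧ x i < 1) (hsum : ∑ i, x i = 1)
    (hnf : ∀ i, φ < x i) :
    (Finset.univ.sup' ⟨⟨0, by omega⟩, Finset.mem_univ _⟩
        (fun i => x i ^ p / ∑ j, x j ^ p) =
      (Finset.univ.inf' ⟨⟨0, by omega⟩, Finset.mem_univ _⟩ x) ^ p / ∑ j, x j ^ p) ∧
    (Finset.univ.inf' ⟨⟨0, by omega⟩, Finset.mem_univ _⟩ x) ^ p / ∑ j, x j ^ p <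
      (n * φ) ^ p / n ∧
    (n * φ) ^ p / n < 1 := by
  have hne : (Finset.univ : Finset (Fin n)).Nonempty := ⟨⟨0, by omega⟩, Finset.mem_univ _⟩
  have hn0 : (0:ℝ) < n := by positivity
  set S : ℝ := ∑ j, x j ^ p with hS
  have hS0 : 0 < S := Finset.sum_pos (fun j _ => Real.rpow_pos_of_pos (hx j).1 p)
    hne
  set m : ℝ := Finset.univ.inf' hne x with hm
  obtain ⟨i₀, -, hmi₀⟩ := Finset.exists_mem_eq_inf' hne x
  have hm0 : 0 < m := by rw [hm, hmi₀]; exact (hx i₀).1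
  have hmφ : φ < m := by rw [hm, hmi₀]; exact hnf i₀
  -- part 1 : sup' = m^p / S
  have part1 : (Finset.univ.sup' hne (fun i => x i ^ p / S)) = m ^ p / S := by
    apply le_antisymm
    · apply Finset.sup'_le
      intro i _
      have h1 : m ≤ x i := Finset.inf'_le x (Finset.mem_univ i)
      have h2 : x i ^ p ≤ m ^ p := Real.rpow_le_rpow_of_nonpos hm0 h1 hp.2.le
      gcongr
    · have : m ^ p / S = x i₀ ^ p / S := by rw [hm, hmi₀]
      rw [this]
      exact Finset.le_sup' (fun i => x i ^ p / S) (Finset.mem_univ i₀)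
  -- AM-GM lower bound on S : S ≥ n * (1/n)^p
  have hSlb : (n:ℝ) * (1/n) ^ p ≤ S := by
    have hw : ∑ _i : Fin n, (1:ℝ)/n = 1 := by
      simp [Finset.sum_const, Finset.card_univ]
      field_simp
    -- geometric mean of x ≤ 1/n
    have hG : ∏ i, x i ^ ((1:ℝ)/n) ≤ 1/n := by
      have := Real.geom_mean_le_arith_mean_weighted Finset.univ (fun _ => (1:ℝ)/n) x
        (fun i _ => by positivity) hw (fun i _ => (hx i).1.le)
      calc ∏ i, x i ^ ((1:ℝ)/n) ≤ ∑ i, (1:ℝ)/n * x i := this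
        _ = 1/n := by rw [← Finset.mul_sum, hsum, mul_one]
    have hGpos : 0 < ∏ i, x i ^ ((1:ℝ)/n) :=
      Finset.prod_pos fun i _ => Real.rpow_pos_of_pos (hx i).1 _
    -- geometric mean of x^p ≥ (1/n)^p
    have hGp : ((1:ℝ)/n) ^ p ≤ (∏ i, x i ^ ((1:ℝ)/n)) ^ p :=
      Real.rpow_le_rpow_of_nonpos hGpos hG hp.2.le
    have hprod : (∏ i, x i ^ ((1:ℝ)/n)) ^ p = ∏ i, (x i ^ p) ^ ((1:ℝ)/n) := by
      rw [← Real.finset_prod_rpow _ _ (fun i _ => (Real.rpow_pos_of_pos (hx i).1 _).le) p]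
      apply Finset.prod_congr rfl
      intro i _
      rw [← Real.rpow_mul (hx i).1.le, ← Real.rpow_mul (hx i).1.le, mul_comm]
    have hAM : ∏ i, (x i ^ p) ^ ((1:ℝ)/n) ≤ ∑ i, (1:ℝ)/n * x i ^ p :=
      Real.geom_mean_le_arith_mean_weighted Finset.univ (fun _ => (1:ℝ)/n)
        (fun i => x i ^ p) (fun i _ => by positivity) hw
        (fun i _ => (Real.rpow_pos_of_pos (hx i).1 p).le)
    have : ((1:ℝ)/n) ^ p ≤ (1/n) * S := by
      calc ((1:ℝ)/n) ^ p ≤ (∏ i, x i ^ ((1:ℝ)/n)) ^ p := hGp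
        _ = ∏ i, (x i ^ p) ^ ((1:ℝ)/n) := hprod
        _ ≤ ∑ i, (1:ℝ)/n * x i ^ p := hAM
        _ = (1/n) * S := by rw [← Finset.mul_sum]
    have h := mul_le_mul_of_nonneg_left this hn0.le
    rw [mul_comm (1/(n:ℝ)) S, ← mul_assoc] at h
    field_simp at h ⊢
    linarith
  -- rewrite (n*φ)^p / n
  have hnp0 : (0:ℝ) < (n:ℝ) ^ p := Real.rpow_pos_of_pos hn0 p
  have hkey : (↑n * φ) ^ p / n = φ ^ p / ((n:ℝ) * (1/n) ^ p) := by
    rw [Real.mul_rpow hn0.le hφ.1.le, one_div, Real.inv_rpow hn0.le]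
    field_simp
  have hDpos : 0 < (n:ℝ) * (1/n) ^ p := by positivity
  -- part 2
  have part2 : m ^ p / S < (↑n * φ) ^ p / n := by
    rw [hkey]
    have h1 : m ^ p / S ≤ m ^ p / ((n:ℝ) * (1/n) ^ p) :=
      div_le_div_of_nonneg_left (Real.rpow_pos_of_pos hm0 p).le hDpos hSlb
    have h2 : m ^ p < φ ^ p := Real.rpow_lt_rpow_of_neg hφ.1 hmφ hp.2
    calc m ^ p / S ≤ m ^ p / ((n:ℝ) * (1/n) ^ p) := h1
      _ < φ ^ p / ((n:ℝ) * (1/n) ^ p) := by gcongr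
  -- part 3
  have hnφ1 : (n:ℝ) * φ < 1 := by
    rw [lt_div_iff₀ hn0] at hφ; linarith [hφ.2]
  have hnφ0 : (0:ℝ) < n * φ := mul_pos hn0 hφ.1
  have hlogneg : Real.log ((n:ℝ) * φ) < 0 := Real.log_neg hnφ0 hnφ1
  have hlt : p * Real.log ((n:ℝ) * φ) < Real.log n := by
    have := hp.1
    rw [div_lt_iff_of_neg hlogneg] at this
    linarith
  have part3 : (↑n * φ) ^ p / n < 1 := by
    rw [div_lt_one hn0]
    calc ((n:ℝ) * φ) ^ p = Real.exp (Real.log ((n:ℝ)*φ) * p) :=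
          Real.rpow_def_of_pos hnφ0 p
      _ < Real.exp (Real.log n) := by
          apply Real.exp_lt_exp.mpr; rw [mul_comm]; exact hlt
      _ = n := Real.exp_log hn0
  exact ⟨part1, part2, part3⟩
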